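/- Let M be a timelike surface in ℝ^{n,1} with canonical null direction Z, and let W be a lightlike tangent vector field with ⟨Z^⊤, W⟩ = -1. Set a := ⟨II(W,W), Z^⊥⟩. Then the Levi-Civita connection of M satisfies ∇_{Z^⊤}Z^⊤ = 0, ∇_{Z^⊤}W = 0, ∇_W Z^⊤ = -a Z^⊤ and ∇_W W = a W; in particular the Lie bracket satisfies [Z^⊤, W] = a Z^⊤. -/
import Mathlib


/-- Connection identities in the lightlike frame (Z^⊤, W): with a = ⟨II(W,W), Z^⊥⟩,
∇_{Z^⊤}Z^⊤ = 0, ∇_{Z^⊤}W = 0, ∇_W Z^⊤ = -a Z^⊤, ∇_W W = a W and [Z^⊤, W] = a Z^⊤. -/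
theorem stmt3
    (Mp T Nv : Type)
    [AddCommGroup T] [Module (Mp → ℝ) T]
    [AddCommGroup Nv] [Module (Mp → ℝ) Nv]
    -- the induced (Lorentzian) metric on tangent fields and the (Riemannian) metric on normal fields
    (g : T → T → Mp → ℝ) (gN : Nv → Nv → Mp → ℝ)
    -- Levi-Civita connection of M, normal connection, second fundamental form, shape operator
    (D : T → T → T) (Dn : T → Nv → Nv)
    (II : T → T → Nv) (A : Nv → T → T)
    -- action of vector fields on functions, Lie bracket, gradient
    (d : T → (Mp → ℝ) → Mp → ℝ) (lie : T → T → T) (grad : (Mp → ℝ) → T)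
    -- the tangent and normal parts of Z and the lightlike field W
    (ZT W : T) (ZP : Nv)
    (g_symm : ∀ X Y, g X Y = g Y X)
    (gN_symm : ∀ μ ν, gN μ ν = gN ν μ)
    (gN_def : ∀ ν : Nv, gN ν ν = 0 → ν = 0)
    (II_symm : ∀ X Y, II X Y = II Y X)
    (shape : ∀ ν X Y, g (A ν X) Y = gN (II X Y) ν)
    (metr : ∀ X Y Y', d X (g Y Y') = g (D X Y) Y' + g Y (D X Y'))
    (metrN : ∀ X μ ν, d X (gN μ ν) = gN (Dn X μ) ν + gN μ (Dn X ν))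
    (tors : ∀ X Y, lie X Y = D X Y - D Y X)
    (dconst : ∀ X (c : ℝ), d X (fun _ => c) = 0)
    (grad_def : ∀ h X, g (grad h) X = d X h)
    -- (Z^⊤, W) is a frame of lightlike tangent fields with ⟨Z^⊤, W⟩ = -1
    (frame : ∀ v : T, v = (-(g v W)) • ZT + (-(g v ZT)) • W)
    (hZT : g ZT ZT = 0) (hZTne : ZT ≠ 0)
    (hW : g W W = 0) (hWne : W ≠ 0)
    (hZTW : g ZT W = fun _ => (-1 : ℝ))
    -- Z is unit spacelike, so Z^⊥ is a unit normal field
    (hZP : gN ZP ZP = fun _ => (1 : ℝ))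
    -- the compatibility equations coming from Z being a constant vector field
    (compat1 : ∀ X, D X ZT = A ZP X)
    (compat2 : ∀ X, Dn X ZP = -(II ZT X))
    -- Codazzi equation (the ambient space is flat)
    (codazzi : ∀ X Y Y', Dn X (II Y Y') - II (D X Y) Y' - II Y (D X Y')
        = Dn Y (II X Y') - II (D Y X) Y' - II X (D Y Y')) :
    D ZT ZT = 0 ∧ D ZT W = 0
    ∧ D W ZT = (-(gN (II W W) ZP)) • ZT
    ∧ D W W = (gN (II W W) ZP) • W
    ∧ lie ZT W = (gN (II W W) ZP) • ZT := by
  -- functions with f + f = 0 are zero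
  have half : ∀ f : Mp → ℝ, f + f = 0 → f = 0 := by
    intro f h
    funext x
    have := congrFun h x
    simp only [Pi.add_apply, Pi.zero_apply] at this
    show f x = (0 : ℝ)
    linarith
  -- derivative of constant metric coefficients vanishes
  have dZTZT : ∀ X, d X (g ZT ZT) = 0 := by
    intro X; rw [hZT]; exact dconst X 0
  have dWW : ∀ X, d X (g W W) = 0 := by
    intro X; rw [hW]; exact dconst X 0
  have dZTW : ∀ X, d X (g ZT W) = 0 := by
    intro X; rw [hZTW]; exact dconst X (-1)
  -- key: g (A ZP X) ZT = 0 for all X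
  have key : ∀ X, g (A ZP X) ZT = 0 := by
    intro X
    have h := metr X ZT ZT
    rw [compat1 X, dZTZT X, g_symm ZT (A ZP X)] at h
    exact half _ h.symm
  have hIIZT : ∀ X, gN (II X ZT) ZP = 0 := by
    intro X; rw [← shape ZP X ZT]; exact key X
  have hAZT_W : g (A ZP ZT) W = 0 := by
    rw [shape ZP ZT W, II_symm ZT W]; exact hIIZT W
  -- ∇_{Z^⊤}Z^⊤ = 0
  have h1 : D ZT ZT = 0 := by
    rw [compat1 ZT]
    have hf := frame (A ZP ZT)
    rw [key ZT, hAZT_W] at hf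
    simpa using hf
  -- ∇_{Z^⊤}W = 0
  have hDZTW_W : g (D ZT W) W = 0 := by
    have h := metr ZT W W
    rw [dWW ZT, g_symm W (D ZT W)] at h
    exact half _ h.symm
  have hDZTW_ZT : g (D ZT W) ZT = 0 := by
    have h := metr ZT ZT W
    rw [dZTW ZT, compat1 ZT, hAZT_W, g_symm ZT (D ZT W)] at h
    simpa using h.symm
  have h2 : D ZT W = 0 := by
    have hf := frame (D ZT W)
    rw [hDZTW_W, hDZTW_ZT] at hf
    simpa using hf
  -- ∇_W Z^⊤ = -a Z^⊤
  have hAW_W : g (A ZP W) W = gN (II W W) ZP := shape ZP W W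
  have h3 : D W ZT = (-(gN (II W W) ZP)) • ZT := by
    rw [compat1 W]
    have hf := frame (A ZP W)
    rw [key W, hAW_W] at hf
    simpa using hf
  -- ∇_W W = a W
  have hDWW_W : g (D W W) W = 0 := by
    have h := metr W W W
    rw [dWW W, g_symm W (D W W)] at h
    exact half _ h.symm
  have hDWW_ZT : g (D W W) ZT = -(gN (II W W) ZP) := by
    have h := metr W ZT W
    rw [dZTW W, compat1 W, hAW_W, g_symm ZT (D W W)] at h
    have := eq_neg_of_add_eq_zero_right h.symm
    exact this
  have h4 : D W W = (gN (II W W) ZP) • W := by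
    have hf := frame (D W W)
    rw [hDWW_W, hDWW_ZT] at hf
    simpa using hf
  -- Lie bracket
  have h5 : lie ZT W = (gN (II W W) ZP) • ZT := by
    rw [tors ZT W, h2, h3, neg_smul]
    abel
  exact ⟨h1, h2, h3, h4, h5⟩
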